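/- Let P be positive semidefinite with positive eigenvalues a₁,…,a_r. P has a companion if and only if there exist orthonormal eigenvectors v₁,…,v_r for a₁,…,a_r and orthonormal vectors v_{r+1},…,v_n spanning ker P such that Σ_{i=1}^r a_i (v_i ∘ v̄_i) lies in the convex cone generated by {v_j ∘ v̄_j : r+1 ≤ j ≤ n}. -/

import Mathlib

open scoped ComplexOrder
open Matrix

noncomputable def opNorm {n : Type*} [Fintype n] [DecidableEq n] (M : Matrix n n ℂ) : ℝ :=
  ‖(Matrix.toEuclideanCLM (𝕜 := ℂ) M : EuclideanSpace ℂ n →L[ℂ] EuclideanSpace ℂ n)‖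

/-- `M` is minimal: its operator norm is ≤ that of `M + D` for every real diagonal `D`. -/
def IsMinimal {n : Type*} [Fintype n] [DecidableEq n] (M : Matrix n n ℂ) : Prop :=
  ∀ d : n → ℝ, opNorm M ≤ opNorm (M + Matrix.diagonal fun i => (d i : ℂ))

/-- The family `v` is orthonormal for the standard inner product of `ℂⁿ`. -/
def ONFamily {ι : Type*} [DecidableEq ι] {n : Type*} [Fintype n]
    (v : ι → (n → ℂ)) : Prop :=
  ∀ i j, dotProduct (star (v i)) (v j) = if i = j then (1 : ℂ) else 0


section Helpers

variable {n : Type*} [Fintype n] [DecidableEq n]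

lemma ON.col_orthonormal {v : n → n → ℂ} (hv : ONFamily v) (k m : n) :
    ∑ i, v i m * (starRingEnd ℂ) (v i k) = if k = m then 1 else 0 := by
  have hVVh : (Matrix.of v) * (Matrix.of v)ᴴ = 1 := by
    ext i j
    have h := hv j i
    simp only [dotProduct, Pi.star_apply, RCLike.star_def] at h
    simp only [mul_apply, conjTranspose_apply, of_apply, RCLike.star_def, one_apply]
    rw [Finset.sum_congr rfl (fun x _ => mul_comm _ _), h]
    by_cases hij : i = j <;> simp [hij, eq_comm]
  have hVhV : (Matrix.of v)ᴴ * (Matrix.of v) = 1 := mul_eq_one_comm.mp hVVh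
  have h2 : ((Matrix.of v)ᴴ * (Matrix.of v)) k m = (1 : Matrix n n ℂ) k m := by rw [hVhV]
  simp only [mul_apply, conjTranspose_apply, of_apply, RCLike.star_def, one_apply] at h2
  rw [← h2]
  exact Finset.sum_congr rfl (fun x _ => mul_comm _ _)

lemma spectral_eq {v : n → n → ℂ} (hv : ONFamily v)
    (M : Matrix n n ℂ) (c : n → ℂ) (hMv : ∀ i, M *ᵥ v i = c i • v i) :
    M = ∑ i, c i • vecMulVec (v i) (star (v i)) := by
  ext k l
  have key : ∀ i, c i * v i k = ∑ m, M k m * v i m := by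
    intro i
    have := congrFun (hMv i) k
    simp only [mulVec, dotProduct, Pi.smul_apply, smul_eq_mul] at this
    rw [← this]
  calc M k l = ∑ m, M k m * (if l = m then 1 else 0) := by
        simp [mul_ite]
    _ = ∑ m, M k m * ∑ i, v i m * (starRingEnd ℂ) (v i l) := by
        simp_rw [ON.col_orthonormal hv]
    _ = ∑ i, (∑ m, M k m * v i m) * (starRingEnd ℂ) (v i l) := by
        simp_rw [Finset.mul_sum, Finset.sum_mul, mul_assoc]
        rw [Finset.sum_comm]
    _ = ∑ i, c i * v i k * (starRingEnd ℂ) (v i l) := by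
        simp_rw [key]
    _ = (∑ i, c i • vecMulVec (v i) (star (v i))) k l := by
        rw [Matrix.sum_apply]
        refine Finset.sum_congr rfl (fun i _ => ?_)
        simp [vecMulVec_apply, mul_assoc, Pi.star_apply, RCLike.star_def]

lemma sumform_mulVec (v : n → n → ℂ) (c : n → ℂ) (x : n → ℂ) :
    (∑ i, c i • vecMulVec (v i) (star (v i))) *ᵥ x
      = ∑ i, (c i * (dotProduct (star (v i)) x)) • v i := by
  ext k
  simp [mulVec, dotProduct, Finset.sum_apply, vecMulVec_apply, Matrix.sum_apply,
    Finset.sum_mul, Finset.mul_sum, mul_assoc]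
  conv_lhs => rw [Finset.sum_comm]
  exact Finset.sum_congr rfl fun i _ => Finset.sum_congr rfl fun m _ => by ring

lemma on_eigen {v : n → n → ℂ} (hv : ONFamily v) (c : n → ℂ) (j : n) :
    (∑ i, c i • vecMulVec (v i) (star (v i))) *ᵥ v j = c j • v j := by
  rw [sumform_mulVec]
  rw [Finset.sum_congr rfl (fun i _ => by rw [hv i j])]
  simp

lemma sumform_diag (v : n → n → ℂ) (c : n → ℝ) (k : n) :
    (∑ i, (c i : ℂ) • vecMulVec (v i) (star (v i))) k k
      = ((∑ i, c i * ‖v i k‖ ^ 2 : ℝ) : ℂ) := by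
  rw [Matrix.sum_apply]
  push_cast
  refine Finset.sum_congr rfl (fun i _ => ?_)
  simp [vecMulVec_apply, Pi.star_apply, RCLike.star_def, mul_assoc,
    Complex.mul_conj, Complex.normSq_eq_norm_sq]

lemma sumform_herm (v : n → n → ℂ) (c : n → ℝ) :
    (∑ i, (c i : ℂ) • vecMulVec (v i) (star (v i))).IsHermitian := by
  show _ = _
  ext k l
  simp only [conjTranspose_apply, Matrix.sum_apply, Pi.smul_apply, vecMulVec_apply,
    Pi.star_apply, smul_eq_mul, star_sum, star_mul', RCLike.star_def, Complex.conj_ofReal,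
    Complex.conj_conj]
  refine Finset.sum_congr rfl fun i _ => ?_
  simp only [Matrix.smul_apply, vecMulVec_apply, Pi.star_apply, smul_eq_mul, star_mul',
    RCLike.star_def, Complex.conj_ofReal, Complex.conj_conj, _root_.map_mul]
  ring

lemma dp_sum {ι : Type*} (s : Finset ι) (x : n → ℂ) (f : ι → n → ℂ) :
    dotProduct x (∑ i ∈ s, f i) = ∑ i ∈ s, dotProduct x (f i) := by
  simp only [dotProduct, Finset.sum_apply, Finset.mul_sum]
  rw [Finset.sum_comm]

lemma sumform_psd (v : n → n → ℂ) (c : n → ℝ) (hc : ∀ i, 0 ≤ c i) :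
    (∑ i, (c i : ℂ) • vecMulVec (v i) (star (v i))).PosSemidef := by
  refine PosSemidef.of_dotProduct_mulVec_nonneg (sumform_herm v c) (fun x => ?_)
  rw [sumform_mulVec, dp_sum]
  apply Finset.sum_nonneg
  intro i _
  rw [dotProduct_smul]
  have h1 : dotProduct (star x) (v i)
      = (starRingEnd ℂ) (dotProduct (star (v i)) x) := by
    simp [dotProduct, map_sum, mul_comm]
  rw [h1, smul_eq_mul, mul_comm _ ((starRingEnd ℂ) _), mul_left_comm,
    mul_comm ((starRingEnd ℂ) _), Complex.mul_conj, ← Complex.ofReal_mul,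
    Complex.zero_le_real]
  exact mul_nonneg (hc i) (Complex.normSq_nonneg _)

lemma mul_vecMulVec (M : Matrix n n ℂ) (u w : n → ℂ) :
    M * vecMulVec u w = vecMulVec (M *ᵥ u) w := by
  ext i j
  simp [mul_apply, vecMulVec_apply, mulVec, dotProduct, Finset.sum_mul, mul_assoc]

lemma aux_zero {M : Matrix n n ℂ} (hM : M.PosSemidef) (x : n → ℂ) (t : ℝ) (ht : t < 0)
    (h : M *ᵥ x = (t : ℂ) • x) : x = 0 := by
  have h0 := hM.dotProduct_mulVec_nonneg x
  rw [h, dotProduct_smul, smul_eq_mul] at h0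
  have h1 : (0 : ℂ) ≤ dotProduct (star x) x := dotProduct_star_self_nonneg x
  rw [← dotProduct_star_self_eq_zero (v := x)]
  set s := dotProduct (star x) x with hs
  have hre : ((t : ℂ) * s).re = t * s.re := by
    simp [Complex.mul_re, Complex.ofReal_re, Complex.ofReal_im]
  rw [Complex.nonneg_iff] at h0 h1
  have hsre : s.re = 0 := by nlinarith [h0.1, h1.1, hre]
  exact Complex.ext (by simpa using hsre) (by simpa using h1.2.symm)

lemma eigen_split {P Q : Matrix n n ℂ} (hP : P.PosSemidef) (hQ : Q.PosSemidef)
    (hPQ : P * Q = 0) (w : n → ℂ) (lam : ℝ) (hw : (P - Q) *ᵥ w = (lam : ℂ) • w) :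
    P *ᵥ w = ((max lam 0 : ℝ) : ℂ) • w ∧ Q *ᵥ w = ((max (-lam) 0 : ℝ) : ℂ) • w := by
  have hQP : Q * P = 0 := by
    have := congrArg Matrix.conjTranspose hPQ
    rwa [Matrix.conjTranspose_mul, hP.1, hQ.1, Matrix.conjTranspose_zero] at this
  have hsub : P *ᵥ w - Q *ᵥ w = (lam : ℂ) • w := by rwa [sub_mulVec] at hw
  rcases lt_trichotomy lam 0 with hl | hl | hl
  · -- lam < 0 : P *ᵥ w = 0
    have h1 : P *ᵥ (P *ᵥ w) = (lam : ℂ) • (P *ᵥ w) := by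
      have h2 : P *ᵥ ((P - Q) *ᵥ w) = P *ᵥ ((lam : ℂ) • w) := by rw [hw]
      rw [sub_mulVec, mulVec_sub, mulVec_smul] at h2
      rwa [show P *ᵥ (Q *ᵥ w) = 0 by rw [mulVec_mulVec, hPQ, zero_mulVec], sub_zero] at h2
    have hPw0 : P *ᵥ w = 0 := aux_zero hP _ lam hl h1
    have hQw : Q *ᵥ w = ((-lam : ℝ) : ℂ) • w := by
      rw [hPw0, zero_sub] at hsub
      rw [show ((-lam : ℝ) : ℂ) = -(lam : ℂ) by push_cast; ring, neg_smul, ← hsub, neg_neg]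
    constructor
    · rw [hPw0, max_eq_right hl.le]; simp
    · rw [hQw, max_eq_left (by linarith)]
  · -- lam = 0
    subst hl
    have heq : P *ᵥ w = Q *ᵥ w := by
      have := hsub; simp only [Complex.ofReal_zero, zero_smul, sub_eq_zero] at this; exact this
    have hz : dotProduct (star (P *ᵥ w)) (Q *ᵥ w) = 0 := by
      rw [star_mulVec, hP.1, ← dotProduct_mulVec, mulVec_mulVec, hPQ, zero_mulVec,
        dotProduct_zero]
    rw [← heq] at hz
    have hPw0 : P *ᵥ w = 0 := dotProduct_star_self_eq_zero.mp hz
    refine ⟨by rw [hPw0]; simp, by rw [← heq, hPw0]; simp⟩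
  · -- lam > 0 : Q *ᵥ w = 0
    have h1 : Q *ᵥ (Q *ᵥ w) = ((-lam : ℝ) : ℂ) • (Q *ᵥ w) := by
      have h2 : Q *ᵥ ((P - Q) *ᵥ w) = Q *ᵥ ((lam : ℂ) • w) := by rw [hw]
      rw [sub_mulVec, mulVec_sub, mulVec_smul] at h2
      rw [show Q *ᵥ (P *ᵥ w) = 0 by rw [mulVec_mulVec, hQP, zero_mulVec], zero_sub] at h2
      have := congrArg Neg.neg h2
      push_cast
      rw [neg_smul, ← this, neg_neg]
    have hQw0 : Q *ᵥ w = 0 := aux_zero hQ _ (-lam) (by linarith) h1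
    have hPw : P *ᵥ w = (lam : ℂ) • w := by rwa [hQw0, sub_zero] at hsub
    constructor
    · rw [hPw, max_eq_left hl.le]
    · rw [hQw0, max_eq_right (by linarith)]; simp

lemma on_linearIndependent {α : Type*} [Fintype α] [DecidableEq α]
    {f : α → (n → ℂ)} (hf : ONFamily f) : LinearIndependent ℂ f := by
  rw [Fintype.linearIndependent_iff]
  intro c hc j
  have h := congrArg (fun y => dotProduct (star (f j)) y) hc
  simp only [dotProduct_zero] at h
  rw [dp_sum] at h
  simp only [dotProduct_smul, hf j, smul_eq_mul, mul_ite, mul_one, mul_zero] at h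
  rwa [Finset.sum_ite_eq Finset.univ j c, if_pos (Finset.mem_univ j)] at h

lemma on_card_le {α β : Type*} [Fintype α] [DecidableEq α] [Fintype β]
    {f : α → (n → ℂ)} (hf : ONFamily f) (g : β → (n → ℂ))
    (hmem : ∀ i, f i ∈ Submodule.span ℂ (Set.range g)) :
    Fintype.card α ≤ Fintype.card β := by
  haveI : FiniteDimensional ℂ (Submodule.span ℂ (Set.range g)) :=
    FiniteDimensional.span_of_finite ℂ (Set.finite_range g)
  have hli' : LinearIndependent ℂ
      (fun i => (⟨f i, hmem i⟩ : Submodule.span ℂ (Set.range g))) := by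
    apply LinearIndependent.of_comp (Submodule.span ℂ (Set.range g)).subtype
    exact on_linearIndependent hf
  calc Fintype.card α ≤ Module.finrank ℂ (Submodule.span ℂ (Set.range g)) :=
        LinearIndependent.fintype_card_le_finrank hli'
    _ ≤ Fintype.card β := finrank_range_le_card g

lemma dp_conj (x y : n → ℂ) :
    dotProduct (star x) y = (starRingEnd ℂ) (dotProduct (star y) x) := by
  simp [dotProduct, map_sum, mul_comm]

lemma on_sub {α : Type*} [DecidableEq α] {f : α → n → ℂ} (hf : ONFamily f)
    {β : Type*} [DecidableEq β] (g : β → α) (hg : Function.Injective g) :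
    ONFamily (fun b => f (g b)) := by
  intro i j
  rw [hf (g i) (g j)]
  simp [hg.eq_iff]

end Helpers

theorem stmt11 (n r : ℕ) (hr : 0 < r) (hrn : r < n)
    (P : Matrix (Fin n) (Fin n) ℂ) (a : Fin n → ℝ)
    (hapos : ∀ i : Fin n, (i : ℕ) < r → 0 < a i)
    (ha0 : ∀ i : Fin n, r ≤ (i : ℕ) → a i = 0)
    (u : Fin n → (Fin n → ℂ)) (hu : ONFamily u)
    (hP : P = ∑ i, (a i : ℂ) • Matrix.vecMulVec (u i) (star (u i))) :
    (∃ Q : Matrix (Fin n) (Fin n) ℂ, Q.PosSemidef ∧ P * Q = 0 ∧ ∀ i, P i i = Q i i) ↔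
    (∃ v : Fin n → (Fin n → ℂ), ONFamily v ∧
      (∀ i, P.mulVec (v i) = (a i : ℂ) • v i) ∧
      (fun k => ∑ i, a i * ‖v i k‖ ^ 2) ∈
        {y : Fin n → ℝ | ∃ x : Fin n → ℝ, (∀ j, 0 ≤ x j) ∧
          (∀ j : Fin n, (j : ℕ) < r → x j = 0) ∧
          y = fun k => ∑ j, x j * ‖v j k‖ ^ 2}) := by
  have hann : ∀ i, 0 ≤ a i := by
    intro i
    by_cases h : (i : ℕ) < r
    · exact (hapos i h).le
    · rw [ha0 i (le_of_not_gt h)]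
  have hPpsd : P.PosSemidef := by rw [hP]; exact sumform_psd u a hann
  have hPeig : ∀ j, P *ᵥ u j = (a j : ℂ) • u j := by
    intro j; rw [hP]; exact on_eigen hu _ j
  constructor
  · rintro ⟨Q, hQpsd, hPQ, hdiag⟩
    have hA : (P - Q).IsHermitian := hPpsd.1.sub hQpsd.1
    set w : Fin n → (Fin n → ℂ) := fun j => ⇑(hA.eigenvectorBasis j) with hwdef
    set lam : Fin n → ℝ := hA.eigenvalues with hlamdef
    have hweig : ∀ j, (P - Q) *ᵥ w j = (lam j : ℂ) • w j := by
      intro j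
      rw [hA.mulVec_eigenvectorBasis j]
      ext k
      simp [hwdef, hlamdef, Complex.real_smul]
    have hwON : ONFamily w := by
      intro i j
      have h := orthonormal_iff_ite.mp hA.eigenvectorBasis.orthonormal i j
      rw [EuclideanSpace.inner_eq_star_dotProduct] at h
      rw [dotProduct_comm] at h
      exact h
    have split := fun j => eigen_split hPpsd hQpsd hPQ (w j) (lam j) (hweig j)
    have hPw : ∀ j, P *ᵥ w j = ((max (lam j) 0 : ℝ) : ℂ) • w j := fun j => (split j).1
    have hQw : ∀ j, Q *ᵥ w j = ((max (-lam j) 0 : ℝ) : ℂ) • w j := fun j => (split j).2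
    have hPdecomp : P = ∑ j, ((max (lam j) 0 : ℝ) : ℂ) • vecMulVec (w j) (star (w j)) :=
      spectral_eq hwON P _ hPw
    have hQdecomp : Q = ∑ j, ((max (-lam j) 0 : ℝ) : ℂ) • vecMulVec (w j) (star (w j)) :=
      spectral_eq hwON Q _ hQw
    -- counting
    have eq1 : {i : Fin n // (i : ℕ) < r} ≃ Fin r :=
      { toFun := fun i => ⟨i.1.1, i.2⟩
        invFun := fun j => ⟨⟨j.1, lt_trans j.2 hrn⟩, j.2⟩
        left_inv := fun i => by ext; rfl
        right_inv := fun j => rfl }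
    have hcard1 : Fintype.card {j : Fin n // 0 < lam j} ≤ r := by
      have hmem : ∀ t : {j : Fin n // 0 < lam j}, w t.1 ∈
          Submodule.span ℂ (Set.range (fun i : {i : Fin n // (i : ℕ) < r} => u i.1)) := by
        intro t
        have h1 : w t.1 = ((lam t.1)⁻¹ : ℂ) • (P *ᵥ w t.1) := by
          rw [hPw, max_eq_left t.2.le, smul_smul]
          rw [inv_mul_cancel₀ (by exact_mod_cast t.2.ne'), one_smul]
        rw [h1]
        apply Submodule.smul_mem
        rw [hP, sumform_mulVec]
        apply Submodule.sum_mem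
        intro i _
        by_cases hir : (i : ℕ) < r
        · exact Submodule.smul_mem _ _ (Submodule.subset_span ⟨⟨i, hir⟩, rfl⟩)
        · rw [ha0 i (le_of_not_gt hir)]
          simp
      have := on_card_le (on_sub hwON (Subtype.val) Subtype.val_injective)
        (fun i : {i : Fin n // (i : ℕ) < r} => u i.1) hmem
      rwa [Fintype.card_congr eq1, Fintype.card_fin] at this
    have hcard2 : r ≤ Fintype.card {j : Fin n // 0 < lam j} := by
      have hmem : ∀ t : {i : Fin n // (i : ℕ) < r}, u t.1 ∈
          Submodule.span ℂ (Set.range (fun j : {j : Fin n // 0 < lam j} => w j.1)) := by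
        intro t
        have h1 : u t.1 = ((a t.1)⁻¹ : ℂ) • (P *ᵥ u t.1) := by
          rw [hPeig, smul_smul, inv_mul_cancel₀ (by exact_mod_cast (hapos t.1 t.2).ne'),
            one_smul]
        rw [h1]
        apply Submodule.smul_mem
        rw [hPdecomp, sumform_mulVec]
        apply Submodule.sum_mem
        intro j _
        by_cases hj : 0 < lam j
        · exact Submodule.smul_mem _ _ (Submodule.subset_span ⟨⟨j, hj⟩, rfl⟩)
        · rw [max_eq_right (le_of_not_gt hj)]
          simp
      have := on_card_le (on_sub hu (Subtype.val) Subtype.val_injective)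
        (fun j : {j : Fin n // 0 < lam j} => w j.1) hmem
      rwa [Fintype.card_congr eq1, Fintype.card_fin] at this
    have hcard : Fintype.card {j : Fin n // 0 < lam j} = r := le_antisymm hcard1 hcard2
    have hcardc : Fintype.card {j : Fin n // ¬ 0 < lam j} = n - r := by
      rw [Fintype.card_subtype_compl, hcard, Fintype.card_fin]
    have hcardc2 : Fintype.card {i : Fin n // ¬ ((i : ℕ) < r)} = n - r := by
      rw [Fintype.card_subtype_compl, Fintype.card_congr eq1, Fintype.card_fin,
        Fintype.card_fin]
    let σ : {i : Fin n // ¬ ((i : ℕ) < r)} ≃ {j : Fin n // ¬ 0 < lam j} :=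
      Fintype.equivOfCardEq (hcardc2.trans hcardc.symm)
    -- the new family
    set v : Fin n → (Fin n → ℂ) := fun i =>
      if h : (i : ℕ) < r then u i else w (σ ⟨i, h⟩).1 with hvdef
    set x : Fin n → ℝ := fun i =>
      if h : (i : ℕ) < r then 0 else max (-(lam (σ ⟨i, h⟩).1)) 0 with hxdef
    have hcross : ∀ (i : Fin n), (i : ℕ) < r → ∀ t : Fin n, ¬ 0 < lam t →
        dotProduct (star (u i)) (w t) = 0 := by
      intro i hi t ht
      have h1 : dotProduct (star (P *ᵥ u i)) (w t) = 0 := by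
        rw [star_mulVec, hPpsd.1.eq, ← dotProduct_mulVec, hPw t,
          max_eq_right (le_of_not_gt ht)]
        simp
      rw [hPeig i] at h1
      have h2 : star ((a i : ℂ) • u i) = (a i : ℂ) • star (u i) := by
        ext k
        simp [Complex.conj_ofReal]
      rw [h2, smul_dotProduct, smul_eq_mul] at h1
      exact (mul_eq_zero.mp h1).resolve_left (by exact_mod_cast (hapos i hi).ne')
    have hvON : ONFamily v := by
      intro i j
      by_cases hi : (i : ℕ) < r
      · by_cases hj : (j : ℕ) < r
        · simpa only [hvdef, dif_pos hi, dif_pos hj] using hu i j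
        · simp only [hvdef, dif_pos hi, dif_neg hj]
          rw [hcross i hi _ (σ ⟨j, hj⟩).2, if_neg (by rintro rfl; exact hj hi)]
      · by_cases hj : (j : ℕ) < r
        · simp only [hvdef, dif_neg hi, dif_pos hj]
          rw [dp_conj, hcross j hj _ (σ ⟨i, hi⟩).2, map_zero,
            if_neg (by rintro rfl; exact hi hj)]
        · simp only [hvdef, dif_neg hi, dif_neg hj]
          rw [hwON]
          have he : ((σ ⟨i, hi⟩).1 = (σ ⟨j, hj⟩).1) ↔ (i = j) := by
            rw [Subtype.val_injective.eq_iff, σ.injective.eq_iff, Subtype.mk.injEq]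
          simp only [he]
    have hveig : ∀ i, P *ᵥ v i = (a i : ℂ) • v i := by
      intro i
      by_cases hi : (i : ℕ) < r
      · simp only [hvdef, dif_pos hi]
        exact hPeig i
      · simp only [hvdef, dif_neg hi]
        rw [hPw, max_eq_right (le_of_not_gt (σ ⟨i, hi⟩).2), ha0 i (le_of_not_gt hi)]
    refine ⟨v, hvON, hveig, x, ?_, ?_, ?_⟩
    · intro j
      by_cases hj : (j : ℕ) < r
      · simp only [hxdef, dif_pos hj]
        exact le_rfl
      · simp only [hxdef, dif_neg hj]
        exact le_max_right _ _
    · intro j hj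
      simp only [hxdef, dif_pos hj]
    · funext k
      have hQdiag : Q k k = ((∑ j, max (-(lam j)) 0 * ‖w j k‖ ^ 2 : ℝ) : ℂ) := by
        conv_lhs => rw [hQdecomp]
        exact sumform_diag w _ k
      have hPdiag : P k k = ((∑ i, a i * ‖v i k‖ ^ 2 : ℝ) : ℂ) := by
        conv_lhs => rw [spectral_eq hvON P (fun i => (a i : ℂ)) hveig]
        exact sumform_diag v a k
      have hreal : (∑ i, a i * ‖v i k‖ ^ 2 : ℝ) = ∑ j, max (-(lam j)) 0 * ‖w j k‖ ^ 2 := by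
        have := (hPdiag.symm.trans (hdiag k)).trans hQdiag
        exact_mod_cast this
      rw [hreal]
      -- now reduce RHS sum over x to the same
      rw [← Fintype.sum_subtype_add_sum_subtype (fun j : Fin n => 0 < lam j)
        (fun j => max (-(lam j)) 0 * ‖w j k‖ ^ 2)]
      rw [← Fintype.sum_subtype_add_sum_subtype (fun i : Fin n => (i : ℕ) < r)
        (fun i => x i * ‖v i k‖ ^ 2)]
      have h1 : ∑ j : {j : Fin n // 0 < lam j}, max (-(lam j.1)) 0 * ‖w j.1 k‖ ^ 2 = 0 := by
        apply Finset.sum_eq_zero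
        intro j _
        rw [max_eq_right (by linarith [j.2])]
        ring
      have h2 : ∑ i : {i : Fin n // (i : ℕ) < r}, x i.1 * ‖v i.1 k‖ ^ 2 = 0 := by
        apply Finset.sum_eq_zero
        intro i _
        simp only [hxdef, dif_pos i.2]
        ring
      rw [h1, h2, zero_add, zero_add]
      rw [← Equiv.sum_comp σ (fun t => max (-(lam t.1)) 0 * ‖w t.1 k‖ ^ 2)]
      apply Finset.sum_congr rfl
      intro i _
      simp only [hxdef, hvdef, dif_neg i.2, Subtype.eta]
  · rintro ⟨v, hvON, hveig, x, hxnn, hx0, hxeq⟩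
    refine ⟨∑ j, (x j : ℂ) • vecMulVec (v j) (star (v j)), sumform_psd v x hxnn, ?_, ?_⟩
    · rw [Finset.mul_sum]
      apply Finset.sum_eq_zero
      intro j _
      rw [Matrix.mul_smul, _root_.mul_vecMulVec, hveig j]
      by_cases hj : (j : ℕ) < r
      · rw [hx0 j hj]
        simp
      · rw [ha0 j (le_of_not_gt hj)]
        simp only [Complex.ofReal_zero, zero_smul]
        rw [show vecMulVec (0 : Fin n → ℂ) (star (v j)) = 0 by ext; simp [vecMulVec_apply]]
        simp
    · intro k
      have h1 : P k k = ((∑ i, a i * ‖v i k‖ ^ 2 : ℝ) : ℂ) := by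
        conv_lhs => rw [spectral_eq hvON P (fun i => (a i : ℂ)) hveig]
        exact sumform_diag v a k
      rw [sumform_diag v x k, h1]
      norm_cast
      exact congrFun hxeq k
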